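/- Let X be a set of feasible routing solutions and B a budget. Let (d₁,f₁) ∈ X with 0 ≤ s₁ ≤ 1, t₁ ≥ 0 and s₁·f₁ − t₁·d₁ = B, and let (d₂,f₂) ∈ X be lower-level optimal for a policy (s₂,t₂) with 0 ≤ s₂ ≤ 1, t₂ ≥ 0, (s₂,t₂) ≠ (0,0), and s₂·f₂ − t₂·d₂ = B. If d₁ < d₂, then (1+t₁)·d₁ + (1−s₁)·f₁ > (1+t₂)·d₂ + (1−s₂)·f₂, i.e., a strictly smaller driven distance forces a strictly larger freight forwarder cost under a common budget. -/
import Mathlib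

/-- Under a common budget `B`, if `(d₁,f₁) ∈ X` satisfies the budget
constraint for a policy `(s₁,t₁)` and `(d₂,f₂) ∈ X` is lower-level optimal for
`(s₂,t₂)` (with `(s₂,t₂) ≠ (0,0)`) and satisfies the budget constraint, then a
strictly smaller driven distance forces a strictly larger freight forwarder cost. -/
theorem stmt3 (X : Set (ℝ × ℝ)) (hX : X.Nonempty)
    (hXnn : ∀ p ∈ X, 0 ≤ p.1 ∧ 0 ≤ p.2)
    (B : ℝ)
    (s₁ t₁ d₁ f₁ s₂ t₂ d₂ f₂ : ℝ)
    (hs₁ : 0 ≤ s₁) (hs₁' : s₁ ≤ 1) (ht₁ : 0 ≤ t₁)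
    (hs₂ : 0 ≤ s₂) (hs₂' : s₂ ≤ 1) (ht₂ : 0 ≤ t₂)
    (hne₂ : (s₂, t₂) ≠ ((0 : ℝ), (0 : ℝ)))
    (hmem₁ : (d₁, f₁) ∈ X)
    (hB₁ : s₁ * f₁ - t₁ * d₁ = B)
    (hmem₂ : (d₂, f₂) ∈ X)
    (hopt₂ : ∀ p ∈ X,
      (1 + t₂) * d₂ + (1 - s₂) * f₂ ≤ (1 + t₂) * p.1 + (1 - s₂) * p.2)
    (hB₂ : s₂ * f₂ - t₂ * d₂ = B)
    (hlt : d₁ < d₂) :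
    (1 + t₁) * d₁ + (1 - s₁) * f₁ > (1 + t₂) * d₂ + (1 - s₂) * f₂ := by
  have hopt := hopt₂ (d₁, f₁) hmem₁
  rw [Ne, Prod.mk.injEq, not_and_or] at hne₂
  have hpos : 0 < s₂ + t₂ := by
    rcases hne₂ with h | h
    · have : 0 < s₂ := lt_of_le_of_ne hs₂ (Ne.symm h)
      linarith
    · have : 0 < t₂ := lt_of_le_of_ne ht₂ (Ne.symm h)
      linarith
  -- reduce to d₂ + f₂ < d₁ + f₁ via budget constraints
  have key : d₂ + f₂ < d₁ + f₁ := by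
    have hf : 0 ≤ f₁ - f₂ := by
      by_contra h
      push_neg at h
      nlinarith [mul_nonneg ht₂ (le_of_lt (sub_pos.mpr hlt)),
        mul_nonneg hs₂ (le_of_lt (neg_pos.mpr (by linarith : f₁ - f₂ < 0)))]
    nlinarith [mul_nonneg ht₂ (le_of_lt (sub_pos.mpr hlt)),
      mul_nonneg hs₂ hf,
      mul_pos (lt_of_lt_of_le hpos (by linarith : s₂ + t₂ ≤ s₂ + t₂)) (sub_pos.mpr hlt)]
  linarith
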